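/- Let X be a Hausdorff space and let p : I → X be a loop-free path, i.e. whenever p(s) = p(t) with s < t, the restriction of p to [s,t] is constant. Then the image p(I) ⊆ X is either a single point or homeomorphic to the unit interval I. -/

import Mathlib

open unitInterval

/-- `p` is constant on the closed subinterval `[a, b]` of `I`. -/
def ConstOn {X : Type*} (p : I → X) (a b : I) : Prop :=
  ∀ s ∈ Set.Icc a b, ∀ t ∈ Set.Icc a b, p s = p t

section LoopFreeAuxSec
open Set

namespace LoopFreeAux

set_option linter.unusedSectionVars false


/-- running sup of `w` over `[0, t]`. -/
noncomputable def rsup (w : I → ℝ) (t : I) : ℝ := sSup (w '' Set.Icc 0 t)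

lemma img_nonempty (w : I → ℝ) (t : I) : (w '' Set.Icc 0 t).Nonempty :=
  ⟨w 0, 0, ⟨le_refl 0, t.2.1⟩, rfl⟩

lemma img_bdd {w : I → ℝ} (h1 : ∀ t, w t ≤ 1) (t : I) : BddAbove (w '' Set.Icc 0 t) := by
  refine ⟨1, ?_⟩
  rintro x ⟨s, -, rfl⟩
  exact h1 s

lemma le_rsup {w : I → ℝ} (h1 : ∀ t, w t ≤ 1) {s t : I} (h : s ≤ t) : w s ≤ rsup w t :=
  le_csSup (img_bdd h1 t) ⟨s, ⟨s.2.1, h⟩, rfl⟩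

lemma rsup_le {w : I → ℝ} {t : I} {b : ℝ} (h : ∀ s, s ≤ t → w s ≤ b) : rsup w t ≤ b := by
  refine csSup_le (img_nonempty w t) ?_
  rintro x ⟨s, hs, rfl⟩
  exact h s hs.2

lemma rsup_mono {w : I → ℝ} (h1 : ∀ t, w t ≤ 1) : Monotone (rsup w) := by
  intro s t hst
  exact rsup_le fun u hu => le_rsup h1 (hu.trans hst)

lemma rsup_mem {w : I → ℝ} (h0 : ∀ t, 0 ≤ w t) (h1 : ∀ t, w t ≤ 1) (t : I) :
    rsup w t ∈ Set.Icc (0:ℝ) 1 :=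
  ⟨(h0 t).trans (le_rsup h1 le_rfl), rsup_le fun s _ => h1 s⟩

lemma rsup_continuous {w : I → ℝ} (cw : Continuous w) (h1 : ∀ t, w t ≤ 1) :
    Continuous (rsup w) := by
  rw [Metric.continuous_iff]
  intro t₀ ε hε
  have hε3 : (0:ℝ) < ε / 3 := by linarith
  obtain ⟨δ, hδ, hδw⟩ := Metric.continuous_iff.mp cw t₀ (ε/3) hε3
  refine ⟨δ, hδ, fun t ht => ?_⟩
  have key : ∀ s : I, dist s t₀ ≤ dist t t₀ ∨ s ≤ t₀ ∧ s ≤ t ∨ t₀ ≤ s ∧ t ≤ s := by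
    intro s
    rcases le_total s t₀ with h1' | h1' <;> rcases le_total s t with h2 | h2
    · exact Or.inr (Or.inl ⟨h1', h2⟩)
    · -- t ≤ s ≤ t₀
      left
      rw [Subtype.dist_eq, Subtype.dist_eq, Real.dist_eq, Real.dist_eq]
      have hst : (s:ℝ) ≤ t₀ := h1'
      have hts : (t:ℝ) ≤ s := h2
      rw [abs_sub_comm, abs_of_nonneg (by linarith), abs_sub_comm (t:ℝ), abs_of_nonneg (by linarith)]
      linarith
    · -- t₀ ≤ s ≤ t
      left
      rw [Subtype.dist_eq, Subtype.dist_eq, Real.dist_eq, Real.dist_eq]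
      have hst : (t₀:ℝ) ≤ s := h1'
      have hts : (s:ℝ) ≤ t := h2
      rw [abs_of_nonneg (by linarith), abs_of_nonneg (by linarith)]
      linarith
    · exact Or.inr (Or.inr ⟨h1', h2⟩)
  -- bound each direction
  rcases le_total t t₀ with hle | hle
  · have h1b : rsup w t ≤ rsup w t₀ := rsup_mono h1 hle
    have h2b : rsup w t₀ ≤ rsup w t + 2 * (ε/3) := by
      refine rsup_le fun s hs => ?_
      rcases key s with hk | ⟨-, hk⟩ | ⟨hk, hk'⟩
      · have hws : dist (w s) (w t₀) < ε/3 := hδw s (lt_of_le_of_lt hk ht)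
        have hwt : dist (w t) (w t₀) < ε/3 := hδw t ht
        have h1c := abs_lt.mp ((Real.dist_eq _ _) ▸ hws)
        have h2c := abs_lt.mp ((Real.dist_eq _ _) ▸ hwt)
        have : w t ≤ rsup w t := le_rsup h1 le_rfl
        linarith [h1c.1, h1c.2, h2c.1, h2c.2]
      · calc w s ≤ rsup w t := le_rsup h1 hk
          _ ≤ _ := by linarith
      · -- t₀ ≤ s and s ≤ t₀ means s = t₀; handled by first case anyway. but here t ≤ s, s ≤ t₀
        have : s = t₀ := le_antisymm hs hk
        subst this
        have hwt : dist (w t) (w s) < ε/3 := hδw t ht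
        have h2c := abs_lt.mp ((Real.dist_eq _ _) ▸ hwt)
        have : w t ≤ rsup w t := le_rsup h1 le_rfl
        linarith [h2c.1, h2c.2]
    rw [Real.dist_eq, abs_lt]
    constructor <;> linarith
  · have h1b : rsup w t₀ ≤ rsup w t := rsup_mono h1 hle
    have h2b : rsup w t ≤ rsup w t₀ + ε/3 := by
      refine rsup_le fun s hs => ?_
      rcases key s with hk | ⟨hk, -⟩ | ⟨hk, hk'⟩
      · have hws : dist (w s) (w t₀) < ε/3 := hδw s (lt_of_le_of_lt hk ht)
        have h1c := abs_lt.mp ((Real.dist_eq _ _) ▸ hws)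
        have : w t₀ ≤ rsup w t₀ := le_rsup h1 le_rfl
        linarith [h1c.1, h1c.2]
      · calc w s ≤ rsup w t₀ := le_rsup h1 hk
          _ ≤ _ := by linarith
      · -- t₀ ≤ s, t ≤ s, s ≤ t: s = t ... then t₀ ≤ s, dist s t₀ ≤ dist t t₀
        have : s = t := le_antisymm hs hk'
        subst this
        have hws : dist (w s) (w t₀) < ε/3 := hδw s ht
        have h1c := abs_lt.mp ((Real.dist_eq _ _) ▸ hws)
        have : w t₀ ≤ rsup w t₀ := le_rsup h1 le_rfl
        linarith [h1c.1, h1c.2]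
    rw [Real.dist_eq, abs_lt]
    constructor <;> linarith

lemma rsup_eq_of_const {w : I → ℝ} (h1 : ∀ t, w t ≤ 1) {s t : I} (hst : s ≤ t)
    (hc : ∀ u, s ≤ u → u ≤ t → w u = w s) : rsup w t = rsup w s := by
  refine le_antisymm (rsup_le fun u hu => ?_) (rsup_mono h1 hst)
  rcases le_total u s with h | h
  · exact le_rsup h1 h
  · rw [hc u h hu]
    exact le_rsup h1 le_rfl


variable {X : Type*} [TopologicalSpace X] [T2Space X]
variable {p : I → X}


/-- fibers are order-convex -/
lemma const_between (hlf : ∀ s t : I, s < t → p s = p t → ConstOn p s t)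
    {u v w : I} (huv : p u = p v) (h1 : u ≤ w) (h2 : w ≤ v) : p w = p u := by
  rcases eq_or_lt_of_le (h1.trans h2) with h | h
  · have : u = w := le_antisymm h1 (h ▸ h2)
    rw [this]
  · exact hlf u v h huv w ⟨h1, h2⟩ u ⟨le_rfl, h1.trans h2⟩

lemma fiber_isCompact (hp : Continuous p) (s : I) :
    IsCompact (Subtype.val '' {u : I | p u = p s}) := by
  have hcl : IsClosed {u : I | p u = p s} := isClosed_singleton.preimage hp
  exact (hcl.isCompact).image continuous_subtype_val

lemma exists_fiber_max (hp : Continuous p) (s : I) :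
    ∃ B : I, p B = p s ∧ s ≤ B ∧ ∀ u, p u = p s → u ≤ B := by
  set S : Set ℝ := Subtype.val '' {u : I | p u = p s} with hS
  have hcpt : IsCompact S := fiber_isCompact hp s
  have hne : S.Nonempty := ⟨(s:ℝ), s, rfl, rfl⟩
  obtain ⟨B, hBf, hBval⟩ := hcpt.sSup_mem hne
  refine ⟨B, hBf, ?_, ?_⟩
  · have h : (s:ℝ) ≤ sSup S := le_csSup hcpt.bddAbove ⟨s, rfl, rfl⟩
    rw [← hBval] at h
    exact Subtype.coe_le_coe.mp h
  · intro u hu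
    have h : (u:ℝ) ≤ sSup S := le_csSup hcpt.bddAbove ⟨u, hu, rfl⟩
    rw [← hBval] at h
    exact Subtype.coe_le_coe.mp h

lemma exists_fiber_min (hp : Continuous p) (s : I) :
    ∃ C : I, p C = p s ∧ C ≤ s ∧ ∀ u, p u = p s → C ≤ u := by
  set S : Set ℝ := Subtype.val '' {u : I | p u = p s} with hS
  have hcpt : IsCompact S := fiber_isCompact hp s
  have hne : S.Nonempty := ⟨(s:ℝ), s, rfl, rfl⟩
  obtain ⟨C, hCf, hCval⟩ := hcpt.sInf_mem hne
  refine ⟨C, hCf, ?_, ?_⟩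
  · have h : sInf S ≤ (s:ℝ) := csInf_le hcpt.bddBelow ⟨s, rfl, rfl⟩
    rw [← hCval] at h
    exact Subtype.coe_le_coe.mp h
  · intro u hu
    have h : sInf S ≤ (u:ℝ) := csInf_le hcpt.bddBelow ⟨u, hu, rfl⟩
    rw [← hCval] at h
    exact Subtype.coe_le_coe.mp h


lemma exists_sep (hp : Continuous p) (hlf : ∀ s t : I, s < t → p s = p t → ConstOn p s t)
    (q r : I) :
    ∃ f : I → ℝ, Continuous f ∧ Monotone f ∧ (∀ t, f t ∈ Set.Icc (0:ℝ) 1) ∧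
      (∀ s t, s ≤ t → p s = p t → f s = f t) ∧
      (p q ≠ p r → q < r → (∀ t, t ≤ q → f t = 0) ∧ (∀ t, r ≤ t → f t = 1)) := by
  by_cases hcase : p q ≠ p r ∧ q < r
  · obtain ⟨hne, hqr⟩ := hcase
    haveI : CompactSpace (Set.range p) := isCompact_iff_compactSpace.mp (isCompact_range hp)
    set π : I → Set.range p := fun u => ⟨p u, Set.mem_range_self u⟩ with hπdef
    have hπ : Continuous π := hp.subtype_mk _
    set A : Set (Set.range p) := π '' Set.Icc 0 q with hA
    set B : Set (Set.range p) := π '' Set.Icc r 1 with hB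
    have hIccCpt : ∀ a b : I, IsCompact (Set.Icc a b) := fun a b => (isClosed_Icc).isCompact
    have hAcl : IsClosed A := ((hIccCpt 0 q).image hπ).isClosed
    have hBcl : IsClosed B := ((hIccCpt r 1).image hπ).isClosed
    have hdisj : Disjoint A B := by
      rw [Set.disjoint_left]
      rintro x ⟨u, hu, rfl⟩ ⟨v, hv, hvx⟩
      have hpv : p u = p v := (congrArg Subtype.val hvx).symm
      have huq : u ≤ q := hu.2
      have hrv : r ≤ v := hv.1
      have hq : p q = p u := const_between hlf hpv huq (hqr.le.trans hrv)
      have hr : p r = p u := const_between hlf hpv ((huq.trans hqr.le)) hrv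
      exact hne (hq.trans hr.symm)
    obtain ⟨g, hg0, hg1, hg01⟩ := exists_continuous_zero_one_of_isClosed hAcl hBcl hdisj
    set w : I → ℝ := fun t => g (π t) with hw
    have cw : Continuous w := g.continuous.comp hπ
    have h0 : ∀ t, 0 ≤ w t := fun t => (hg01 (π t)).1
    have h1 : ∀ t, w t ≤ 1 := fun t => (hg01 (π t)).2
    have hwfib : ∀ s t : I, p s = p t → w s = w t := by
      intro s t hst
      have : π s = π t := Subtype.ext hst
      simp only [hw, this]
    refine ⟨rsup w, rsup_continuous cw h1, rsup_mono h1, rsup_mem h0 h1, ?_, ?_⟩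
    · intro s t hst hpst
      refine (rsup_eq_of_const h1 hst ?_).symm
      intro u hsu hut
      exact hwfib u s (const_between hlf hpst hsu hut)
    · intro _ _
      constructor
      · intro t htq
        have hz : ∀ s, s ≤ t → w s = 0 := by
          intro s hs
          have : π s ∈ A := ⟨s, ⟨s.2.1, hs.trans htq⟩, rfl⟩
          exact hg0 this
        have hle : rsup w t ≤ 0 := rsup_le fun s hs => le_of_eq (hz s hs)
        have hge : (0:ℝ) ≤ rsup w t := by
          have := le_rsup h1 (le_refl t)
          linarith [h0 t]
        linarith
      · intro t hrt
        have hup : w r = 1 := by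
          have : π r ∈ B := ⟨r, ⟨le_rfl, r.2.2⟩, rfl⟩
          exact hg1 this
        have hge : (1:ℝ) ≤ rsup w t := hup ▸ le_rsup h1 hrt
        have hle : rsup w t ≤ 1 := rsup_le fun s _ => h1 s
        linarith
  · refine ⟨fun _ => 0, continuous_const, monotone_const, fun t => ⟨le_rfl, zero_le_one⟩, fun _ _ _ _ => rfl, ?_⟩
    intro hne hlt
    exact absurd ⟨hne, hlt⟩ hcase


noncomputable def ratI (q : ℚ) : I := Set.projIcc 0 1 zero_le_one (q : ℝ)

lemma exists_ratI_btwn {a b : I} (h : a < b) : ∃ q : ℚ, a < ratI q ∧ ratI q < b := by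
  obtain ⟨q, hq1, hq2⟩ := exists_rat_btwn (show (a:ℝ) < (b:ℝ) from h)
  have hmem : (q:ℝ) ∈ Set.Icc (0:ℝ) 1 :=
    ⟨le_of_lt (lt_of_le_of_lt a.2.1 hq1), le_of_lt (lt_of_lt_of_le hq2 b.2.2)⟩
  refine ⟨q, ?_, ?_⟩ <;> rw [ratI, Set.projIcc_of_mem _ hmem]
  · exact Subtype.mk_lt_mk.mpr hq1
  · exact Subtype.mk_lt_mk.mpr hq2


end LoopFreeAux
end LoopFreeAuxSec

open LoopFreeAux Set in
/-- A loop-free path `p : I → X` in a Hausdorff space (whenever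
`p s = p t` with `s < t`, `p` is constant on `[s,t]`) has image either a
single point or homeomorphic to the unit interval `I`. -/
theorem loopFree_path_image_point_or_homeomorphic_unitInterval
    {X : Type*} [TopologicalSpace X] [T2Space X]
    (p : I → X) (hp : Continuous p)
    (hlf : ∀ s t : I, s < t → p s = p t → ConstOn p s t) :
    (∃ x : X, Set.range p = {x}) ∨ Nonempty (Set.range p ≃ₜ I) := by
  by_cases hconst : ∀ t, p t = p 0
  · left
    refine ⟨p 0, ?_⟩
    ext x
    constructor
    · rintro ⟨t, rfl⟩
      exact hconst t
    · rintro rfl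
      exact ⟨0, rfl⟩
  · right
    push_neg at hconst
    obtain ⟨t₀, ht₀⟩ := hconst
    choose f hfc hfm hf01 hffib hfsep using
      fun qr : ℚ × ℚ => exists_sep hp hlf (ratI qr.1) (ratI qr.2)
    set c : ℚ × ℚ → ℝ := fun qr => (1/2 : ℝ) ^ (Encodable.encode qr) with hc
    have hc_pos : ∀ qr, 0 < c qr := fun qr => pow_pos (by norm_num) _
    have hc_sum : Summable c := summable_geometric_two.comp_injective Encodable.encode_injective
    set G : I → ℝ := fun t => ∑' qr, c qr * f qr t with hG
    have hGsummand_nonneg : ∀ t qr, 0 ≤ c qr * f qr t :=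
      fun t qr => mul_nonneg (hc_pos qr).le (hf01 qr t).1
    have hGsummand_le : ∀ t qr, c qr * f qr t ≤ c qr := by
      intro t qr
      have h2 := (hf01 qr t).2
      nlinarith [hc_pos qr]
    have hGs : ∀ t, Summable fun qr => c qr * f qr t := fun t =>
      Summable.of_nonneg_of_le (hGsummand_nonneg t) (hGsummand_le t) hc_sum
    have hGc : Continuous G := by
      refine continuous_tsum (fun qr => continuous_const.mul (hfc qr)) hc_sum ?_
      intro qr t
      rw [Real.norm_eq_abs, abs_of_nonneg (hGsummand_nonneg t qr)]
      exact hGsummand_le t qr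
    have hGmono : Monotone G := fun s t hst =>
      Summable.tsum_le_tsum (fun qr => mul_le_mul_of_nonneg_left (hfm qr hst) (hc_pos qr).le)
        (hGs s) (hGs t)
    have hGfib : ∀ s t : I, p s = p t → G s = G t := by
      intro s t hpst
      rcases le_total s t with h | h
      · exact tsum_congr fun qr => by rw [hffib qr s t h hpst]
      · exact (tsum_congr fun qr => by rw [hffib qr t s h hpst.symm]).symm
    have hGstrict : ∀ s t : I, s < t → p s ≠ p t → G s < G t := by
      intro s t hst hne
      obtain ⟨B, hBf, hsB, hBmax⟩ := exists_fiber_max hp s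
      obtain ⟨C, hCf, hCt, hCmin⟩ := exists_fiber_min hp t
      have hBC : B < C := by
        by_contra hcon
        push_neg at hcon
        rcases le_total C s with h | h
        · exact hne ((const_between hlf hCf h hst.le).trans hCf)
        · have h2 : p C = p s := const_between hlf hBf.symm h hcon
          exact hne (h2.symm.trans hCf)
      obtain ⟨q, hq1, hq2⟩ := exists_ratI_btwn hBC
      have hqt : p (ratI q) ≠ p t := fun h => absurd (hCmin _ h) (not_le.mpr hq2)
      obtain ⟨Bq, hBqf, hqBq, hBqmax⟩ := exists_fiber_max hp (ratI q)
      have hBqC : Bq < C := by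
        by_contra hcon
        push_neg at hcon
        have h2 : p C = p (ratI q) := const_between hlf hBqf.symm hq2.le hcon
        exact hqt (h2.symm.trans hCf)
      obtain ⟨r, hr1, hr2⟩ := exists_ratI_btwn hBqC
      have hqrlt : ratI q < ratI r := lt_of_le_of_lt hqBq hr1
      have hpqr : p (ratI q) ≠ p (ratI r) := fun h => absurd (hBqmax _ h.symm) (not_le.mpr hr1)
      obtain ⟨hzero, hone⟩ := hfsep (q, r) hpqr hqrlt
      have hfs : f (q, r) s = 0 := hzero s (hsB.trans hq1.le)
      have hft : f (q, r) t = 1 := hone t (hr2.le.trans hCt)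
      refine Summable.tsum_lt_tsum (i := (q, r))
        (fun qr => mul_le_mul_of_nonneg_left (hfm qr hst.le) (hc_pos qr).le) ?_ (hGs s) (hGs t)
      rw [hfs, hft, mul_zero, mul_one]
      exact hc_pos (q, r)
    -- endpoints
    have h0t₀ : (0:I) < t₀ := by
      have h0le : (0:I) ≤ t₀ := t₀.2.1
      rcases eq_or_lt_of_le h0le with h | h
      · exact absurd (congrArg p h) fun hh => ht₀ hh.symm
      · exact h
    have h01 : G 0 < G 1 :=
      lt_of_lt_of_le (hGstrict 0 t₀ h0t₀ fun h => ht₀ h.symm) (hGmono (t₀.2.2 : t₀ ≤ 1))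
    set D : ℝ := G 1 - G 0 with hDdef
    have hD : 0 < D := sub_pos.mpr h01
    have hH0 : ∀ t, 0 ≤ (G t - G 0) / D :=
      fun t => div_nonneg (sub_nonneg.mpr (hGmono (t.2.1 : (0:I) ≤ t))) hD.le
    have hH1 : ∀ t, (G t - G 0) / D ≤ 1 :=
      fun t => (div_le_one hD).mpr (sub_le_sub_right (hGmono (t.2.2 : t ≤ 1)) _)
    set H : I → I := fun t => ⟨(G t - G 0) / D, hH0 t, hH1 t⟩ with hHdef
    have Hcont : Continuous H :=
      Continuous.subtype_mk ((hGc.sub continuous_const).div_const D) _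
    have HG : ∀ s t : I, H s = H t → G s = G t := by
      intro s t h
      have h2 : (G s - G 0) / D = (G t - G 0) / D := congrArg Subtype.val h
      rw [div_eq_div_iff hD.ne' hD.ne'] at h2
      have h3 := mul_right_cancel₀ hD.ne' h2
      linarith [h3]
    have Hp : ∀ s t : I, H s = H t → p s = p t := by
      intro s t h
      by_contra hne
      rcases lt_trichotomy s t with hlt | heq | hgt
      · exact absurd (HG s t h) (ne_of_lt (hGstrict s t hlt hne))
      · exact hne (heq ▸ rfl)
      · exact absurd (HG t s h.symm) (ne_of_lt (hGstrict t s hgt (Ne.symm hne)))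
    have Hsurj : ∀ y : I, ∃ t : I, H t = y := by
      intro y
      have hv : G 0 + (y:ℝ) * D ∈ Set.Icc (G 0) (G 1) := by
        constructor
        · nlinarith [y.2.1, hD]
        · nlinarith [y.2.2, hD]
      obtain ⟨t, ht⟩ := intermediate_value_univ 0 1 hGc hv
      refine ⟨t, Subtype.ext ?_⟩
      show (G t - G 0) / D = (y:ℝ)
      rw [ht]
      field_simp
      ring
    haveI : CompactSpace (Set.range p) := isCompact_iff_compactSpace.mp (isCompact_range hp)
    set π : I → Set.range p := fun u => ⟨p u, Set.mem_range_self u⟩ with hπdef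
    have hπc : Continuous π := hp.subtype_mk _
    have hπsurj : Function.Surjective π := by
      rintro ⟨x, u, rfl⟩
      exact ⟨u, rfl⟩
    have hqm := (hπc.isClosedMap).isQuotientMap hπc hπsurj
    set φ : Set.range p → I := fun x => H (Classical.choose x.2) with hφdef
    have hφπ : ∀ u : I, φ (π u) = H u := by
      intro u
      have hspec : p (Classical.choose (π u).2) = p u := Classical.choose_spec (π u).2
      show H (Classical.choose (π u).2) = H u
      exact Subtype.ext (by show (G _ - G 0) / D = (G _ - G 0) / D; rw [hGfib _ _ hspec])
    have hφc : Continuous φ := by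
      rw [hqm.continuous_iff]
      have he : (φ ∘ π) = H := funext hφπ
      rw [he]
      exact Hcont
    have hinj : Function.Injective φ := by
      intro x y h
      have hx : p (Classical.choose x.2) = x.1 := Classical.choose_spec x.2
      have hy : p (Classical.choose y.2) = y.1 := Classical.choose_spec y.2
      have h2 : p (Classical.choose x.2) = p (Classical.choose y.2) :=
        Hp _ _ (h : H (Classical.choose x.2) = H (Classical.choose y.2))
      refine Subtype.ext ?_
      rw [← hx, ← hy]
      exact h2
    have hsurjφ : Function.Surjective φ := by
      intro y
      obtain ⟨t, ht⟩ := Hsurj y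
      exact ⟨π t, (hφπ t).trans ht⟩
    exact ⟨Continuous.homeoOfEquivCompactToT2 (f := Equiv.ofBijective φ ⟨hinj, hsurjφ⟩) hφc⟩
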